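/- Let κ > 2, A = κ/2 + √(κ²−4)/2, B = 1/A, and let 𝕃 be the 4×4 real matrix with rows (0, A, 0, −1), (−A+2B, 0, 1, 0), (0, −1, 0, B), (1, 0, −B+2A, 0). Then Ker(𝕃) is spanned by (0,1,0,A) and every nonzero eigenvalue λ of 𝕃 satisfies λ² = −(κ² − 4), so all eigenvalues of 𝕃 are purely imaginary. -/
import Mathlib


set_option maxHeartbeats 1000000 in
private lemma det_fin_four' {R : Type*} [CommRing R] (M : Matrix (Fin 4) (Fin 4) R) :
    M.det =
      M 0 0*M 1 1*M 2 2*M 3 3 - M 0 0*M 1 1*M 2 3*M 3 2 - M 0 0*M 1 2*M 2 1*M 3 3 + M 0 0*M 1 2*M 2 3*M 3 1 + M 0 0*M 1 3*M 2 1*M 3 2 - M 0 0*M 1 3*M 2 2*M 3 1 - M 0 1*M 1 0*M 2 2*M 3 3 + M 0 1*M 1 0*M 2 3*M 3 2 + M 0 1*M 1 2*M 2 0*M 3 3 - M 0 1*M 1 2*M 2 3*M 3 0 - M 0 1*M 1 3*M 2 0*M 3 2 + M 0 1*M 1 3*M 2 2*M 3 0 + M 0 2*M 1 0*M 2 1*M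 3 3 - M 0 2*M 1 0*M 2 3*M 3 1 - M 0 2*M 1 1*M 2 0*M 3 3 + M 0 2*M 1 1*M 2 3*M 3 0 + M 0 2*M 1 3*M 2 0*M 3 1 - M 0 2*M 1 3*M 2 1*M 3 0 - M 0 3*M 1 0*M 2 1*M 3 2 + M 0 3*M 1 0*M 2 2*M 3 1 + M 0 3*M 1 1*M 2 0*M 3 2 - M 0 3*M 1 1*M 2 2*M 3 0 - M 0 3*M 1 2*M 2 0*M 3 1 + M 0 3*M 1 2*M 2 1*M 3 0 := by
  simp [Matrix.det_succ_row_zero, Fin.sum_univ_succ,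
    show Fin.succ (2:Fin 3) = 3 from rfl, show Fin.castSucc (2:Fin 3) = 2 from rfl,
    show Fin.succAbove (2:Fin 4) (2:Fin 3) = 3 from rfl,
    show Fin.succAbove (1:Fin 4) (2:Fin 3) = 3 from rfl,
    show Fin.succAbove (3:Fin 4) (2:Fin 3) = 2 from rfl]
  ring

theorem stmt_13 (κ : ℝ) (hκ : 2 < κ) (A B : ℝ)
    (hA : A = κ / 2 + Real.sqrt (κ ^ 2 - 4) / 2) (hB : B = 1 / A)
    (L : Matrix (Fin 4) (Fin 4) ℝ)
    (hL : L = !![0, A, 0, -1; -A + 2 * B, 0, 1, 0; 0, -1, 0, B; 1, 0, -B + 2 * A, 0]) :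
    LinearMap.ker (Matrix.toLin' L) = Submodule.span ℝ {![0, 1, 0, A]} ∧
    ∀ (lam : ℂ) (x : Fin 4 → ℂ), x ≠ 0 →
      (L.map (fun a : ℝ => (a : ℂ))).mulVec x = lam • x →
        (lam ≠ 0 → lam ^ 2 = -((κ : ℂ) ^ 2 - 4)) ∧ lam.re = 0 := by
  have hs : Real.sqrt (κ ^ 2 - 4) ^ 2 = κ ^ 2 - 4 := Real.sq_sqrt (by nlinarith)
  have hApos : 0 < A := by
    rw [hA]; have := Real.sqrt_nonneg (κ ^ 2 - 4); linarith
  have hA0 : A ≠ 0 := ne_of_gt hApos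
  have hquad : A ^ 2 - κ * A + 1 = 0 := by
    rw [hA]; linear_combination hs / 4
  have hab : A * B = 1 := by rw [hB]; field_simp
  have hsum : A + B = κ := by
    rw [hB]; field_simp; linear_combination hquad
  constructor
  · apply le_antisymm
    · intro v hv
      rw [LinearMap.mem_ker, Matrix.toLin'_apply, hL] at hv
      have e0 := congrFun hv 0
      have e1 := congrFun hv 1
      have e2 := congrFun hv 2
      have e3 := congrFun hv 3
      simp [Matrix.mulVec, dotProduct, Fin.sum_univ_four] at e0 e1 e2 e3
      have h2 : v 0 * (2 * κ ^ 2 - 8) = 0 := by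
        linear_combination e3 + (B - 2*A) * e1 + (9 * v 0) * hab
          - (2 * v 0 * (A + B + κ)) * hsum
      have hv0 : v 0 = 0 := by
        rcases mul_eq_zero.mp h2 with h | h
        · exact h
        · exfalso; nlinarith
      have hv2 : v 2 = 0 := by
        have := e1; rw [hv0] at this; linarith
      have hv3 : v 3 = A * v 1 := by linarith
      rw [Submodule.mem_span_singleton]
      refine ⟨v 1, ?_⟩
      funext i
      fin_cases i <;> simp [hv0, hv2, hv3] <;> ring
    · rw [Submodule.span_le, Set.singleton_subset_iff]
      rw [SetLike.mem_coe, LinearMap.mem_ker, Matrix.toLin'_apply, hL]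
      funext i
      fin_cases i <;>
        simp [Matrix.mulVec, dotProduct, Fin.sum_univ_four] <;>
        linear_combination hab
  · intro lam x hx hLx
    have hab' : (A : ℂ) * (B : ℂ) = 1 := by exact_mod_cast hab
    have hsum' : (A : ℂ) + (B : ℂ) = (κ : ℂ) := by exact_mod_cast hsum
    have hker : ((L.map (fun a : ℝ => (a : ℂ))) - lam • 1).mulVec x = 0 := by
      rw [Matrix.sub_mulVec, Matrix.smul_mulVec, Matrix.one_mulVec, hLx, sub_self]
    have hd0 : ((L.map (fun a : ℝ => (a : ℂ))) - lam • 1).det = 0 :=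
      (Matrix.exists_mulVec_eq_zero_iff).mp ⟨x, hx, hker⟩
    have hdet : ((L.map (fun a : ℝ => (a : ℂ))) - lam • 1).det
        = lam ^ 2 * (lam ^ 2 + ((κ : ℂ) ^ 2 - 4)) := by
      rw [hL, det_fin_four']
      simp [Matrix.sub_apply, Matrix.smul_apply, Matrix.one_apply, Matrix.map_apply]
      ring_nf
      linear_combination (5*(A:ℂ)*B - 2*(A:ℂ)^2 - 2*(B:ℂ)^2 - 1 - 6*lam^2) * hab'
        + lam^2 * ((A:ℂ) + B + κ) * hsum'
    have hfac : lam ^ 2 * (lam ^ 2 + ((κ : ℂ) ^ 2 - 4)) = 0 := by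
      rw [← hdet]; exact hd0
    have hmain : lam ≠ 0 → lam ^ 2 = -((κ : ℂ) ^ 2 - 4) := by
      intro hlam
      rcases mul_eq_zero.mp hfac with h | h
      · exact absurd (pow_eq_zero_iff (by norm_num) |>.mp h) hlam
      · linear_combination h
    refine ⟨hmain, ?_⟩
    by_cases hlam : lam = 0
    · simp [hlam]
    · have h2 := hmain hlam
      have hre : lam.re ^ 2 - lam.im ^ 2 = -(κ ^ 2 - 4) := by
        have := congrArg Complex.re h2
        simpa [pow_two, Complex.mul_re] using this
      have him : lam.re * lam.im + lam.im * lam.re = 0 := by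
        have := congrArg Complex.im h2
        simpa [pow_two, Complex.mul_im] using this
      have hab0 : lam.re * lam.im = 0 := by linarith
      rcases mul_eq_zero.mp hab0 with h | h
      · exact h
      · exfalso; rw [h] at hre; nlinarith
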